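/- Let R → S be a relative Frobenius ring extension of rank n (S free of rank n over R, Hom_R(S,R) ≅ S as S-modules, with generator λ and dual bases (e_i), (f_i)). The map φ₁: Hom_R(M ⊗_S S_R, N) → Hom_S(M, N ⊗_R S), ψ ↦ (m ↦ Σ_i ψ(m e_i) ⊗ f_i), is a well-defined bijection exhibiting the restriction functor (−)_R as left adjoint to (−) ⊗_R S on module categories; in particular its value on the identity of S is 1 ↦ Σ_i e_i ⊗ f_i. -/

import Mathlib

open scoped TensorProduct

/-- **(Frobenius adjunction.)** Let `R → S` be relative Frobenius of rank `n`
(`S` free of rank `n` over `R`, with `λ` generating `Hom_R(S,R)` as `S`-module and dual bases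
`(e_i)`, `(f_i)` satisfying `λ(e_i f_j) = δ_{ij}`).  For an `S`-module `M` and an `R`-module
`N`, the map `φ₁ : Hom_R(M, N) → Hom_S(M, S ⊗_R N)`, `ψ ↦ (m ↦ Σ_i e_i ⊗ ψ(f_i • m))`,
is a well-defined bijection, exhibiting restriction of scalars as left adjoint to induction
`(−) ⊗_R S`; its value on the identity of `S` (taking `M = N = S`, `ψ = id`) sends
`1 ↦ Σ_i e_i ⊗ f_i`. -/
theorem stmt16 {R S : Type*} [CommRing R] [CommRing S] [Algebra R S]
    {n : ℕ} (b : Module.Basis (Fin n) R S) (lam : S →ₗ[R] R)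
    (hgen : ∀ φ : S →ₗ[R] R, ∃! s : S, ∀ x : S, φ x = lam (s * x))
    (e f : Fin n → S)
    (hdual : ∀ i j, lam (e i * f j) = if i = j then (1 : R) else 0)
    (M N : Type*) [AddCommGroup M] [Module R M] [Module S M] [IsScalarTower R S M]
    [AddCommGroup N] [Module R N] :
    (∀ ψ : M →ₗ[R] N, ∃ g : M →ₗ[S] (S ⊗[R] N),
        ∀ m : M, g m = ∑ i, (e i) ⊗ₜ[R] (ψ (f i • m))) ∧
    (∀ g : M →ₗ[S] (S ⊗[R] N), ∃! ψ : M →ₗ[R] N,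
        ∀ m : M, g m = ∑ i, (e i) ⊗ₜ[R] (ψ (f i • m))) ∧
    (∑ i, (e i) ⊗ₜ[R] (f i * (1 : S)) = ∑ i, (e i) ⊗ₜ[R] (f i)) := by
  classical
  have hinj : ∀ s s' : S, (∀ x, lam (s * x) = lam (s' * x)) → s = s' := by
    intro s s' h
    obtain ⟨t, _, hu⟩ := hgen (lam ∘ₗ LinearMap.mulLeft R s)
    have h1 : s = t := hu s (fun x => rfl)
    have h2 : s' = t := hu s' (fun x => show lam (s*x) = _ from h x)
    rw [h1, h2]
  set A : Matrix (Fin n) (Fin n) R := fun i k => lam (e i * b k) with hA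
  set B : Matrix (Fin n) (Fin n) R := fun j k => b.repr (f j) k with hB
  have hf : ∀ j, f j = ∑ k, B j k • b k := by
    intro j
    rw [hB]
    exact (b.sum_repr (f j)).symm
  have hAB : A * B.transpose = 1 := by
    ext i j
    have : lam (e i * f j) = ∑ k, B j k * A i k := by
      rw [hf j, Finset.mul_sum, map_sum]
      congr 1; ext k
      rw [mul_smul_comm, map_smul, smul_eq_mul, hA]
    have h2 := hdual i j
    rw [this] at h2
    simp only [Matrix.mul_apply, Matrix.transpose_apply, Matrix.one_apply]
    rw [← h2]
    congr 1; ext k; ring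
  have hBA : B.transpose * A = 1 := mul_eq_one_comm.mp hAB
  have L2 : ∀ x : S, ∑ i, lam (e i * x) • f i = x := by
    have : (∑ i, LinearMap.smulRight (lam ∘ₗ LinearMap.mulLeft R (e i)) (f i)) = LinearMap.id (R := R) (M := S) := by
      apply b.ext
      intro k
      simp only [LinearMap.sum_apply, LinearMap.smulRight_apply, LinearMap.comp_apply,
        LinearMap.mulLeft_apply, LinearMap.id_apply]
      calc ∑ i, lam (e i * b k) • f i
          = ∑ i, ∑ l, (B i l * A i k) • b l := by
            refine Finset.sum_congr rfl fun i _ => ?_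
            rw [hf i, Finset.smul_sum]
            refine Finset.sum_congr rfl fun l _ => ?_
            rw [smul_smul, hA, mul_comm]
        _ = ∑ l, (∑ i, B i l * A i k) • b l := by
            rw [Finset.sum_comm]
            refine Finset.sum_congr rfl fun l _ => ?_
            rw [Finset.sum_smul]
        _ = ∑ l, ((1 : Matrix (Fin n) (Fin n) R) l k) • b l := by
            refine Finset.sum_congr rfl fun l _ => ?_
            rw [← hBA]
            simp [Matrix.mul_apply, Matrix.transpose_apply]
        _ = b k := by
            simp [Matrix.one_apply]
    intro x
    have := LinearMap.congr_fun this x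
    simpa using this
  have L1 : ∀ x : S, ∑ j, lam (x * f j) • e j = x := by
    intro x
    apply hinj
    intro y
    rw [Finset.sum_mul, map_sum]
    calc ∑ j, lam ((lam (x * f j) • e j) * y)
        = ∑ j, lam (e j * y) * lam (x * f j) := by
          refine Finset.sum_congr rfl fun j _ => ?_
          rw [smul_mul_assoc, map_smul, smul_eq_mul, mul_comm]
      _ = lam (x * y) := by
          conv_rhs => rw [← L2 y]
          rw [Finset.mul_sum, map_sum]
          refine Finset.sum_congr rfl fun j _ => ?_
          rw [mul_smul_comm, map_smul, smul_eq_mul]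
  refine ⟨?_, ?_, ?_⟩
  · -- Part 1: existence of S-linear g for each ψ
    intro ψ
    refine ⟨{ toFun := fun m => ∑ i, e i ⊗ₜ[R] ψ (f i • m)
              map_add' := ?_
              map_smul' := ?_ }, fun m => rfl⟩
    · intro m m'
      simp [smul_add, map_add, TensorProduct.tmul_add, Finset.sum_add_distrib]
    · intro s m
      simp only [RingHom.id_apply]
      calc ∑ i, e i ⊗ₜ[R] ψ (f i • (s • m))
          = ∑ i, ∑ j, lam (e j * (f i * s)) • (e i ⊗ₜ[R] ψ (f j • m)) := by
            refine Finset.sum_congr rfl fun i _ => ?_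
            rw [smul_smul]
            conv_lhs => rw [← L2 (f i * s)]
            rw [Finset.sum_smul]
            rw [show ((∑ j, (lam (e j * (f i * s)) • f j) • m) : M)
                = ∑ j, lam (e j * (f i * s)) • (f j • m) from
              Finset.sum_congr rfl fun j _ => smul_assoc _ _ _]
            rw [map_sum, TensorProduct.tmul_sum]
            refine Finset.sum_congr rfl fun j _ => ?_
            rw [map_smul, TensorProduct.tmul_smul]
        _ = ∑ j, ∑ i, lam (e j * (f i * s)) • (e i ⊗ₜ[R] ψ (f j • m)) := Finset.sum_comm
        _ = s • ∑ i, e i ⊗ₜ[R] ψ (f i • m) := by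
            rw [Finset.smul_sum]
            refine Finset.sum_congr rfl fun j _ => ?_
            rw [TensorProduct.smul_tmul', smul_eq_mul]
            conv_rhs => rw [show s * e j = ∑ i, lam ((s * e j) * f i) • e i from (L1 (s * e j)).symm]
            rw [TensorProduct.sum_tmul]
            refine Finset.sum_congr rfl fun i _ => ?_
            rw [TensorProduct.smul_tmul']
            congr 2
            ring
  · -- Part 2: bijectivity
    intro g
    set L : S ⊗[R] N →ₗ[R] N := TensorProduct.lift (LinearMap.lsmul R N ∘ₗ lam) with hL
    have hLt : ∀ (s : S) (x : N), L (s ⊗ₜ[R] x) = lam s • x := fun s x => rfl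
    have key : ∀ t : S ⊗[R] N, ∑ i, e i ⊗ₜ[R] L (f i • t) = t := by
      intro t
      induction t using TensorProduct.induction_on with
      | zero => simp
      | tmul s x =>
        calc ∑ i, e i ⊗ₜ[R] L (f i • s ⊗ₜ[R] x)
            = ∑ i, (lam (s * f i) • e i) ⊗ₜ[R] x := by
              refine Finset.sum_congr rfl fun i _ => ?_
              rw [TensorProduct.smul_tmul', smul_eq_mul, hLt, TensorProduct.tmul_smul,
                TensorProduct.smul_tmul', mul_comm]
          _ = s ⊗ₜ[R] x := by rw [← TensorProduct.sum_tmul, L1 s]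
      | add x y hx hy =>
        rw [show (∑ i, e i ⊗ₜ[R] L (f i • (x + y)))
            = (∑ i, e i ⊗ₜ[R] L (f i • x)) + ∑ i, e i ⊗ₜ[R] L (f i • y) from ?_, hx, hy]
        rw [← Finset.sum_add_distrib]
        refine Finset.sum_congr rfl fun i _ => ?_
        rw [smul_add, map_add, TensorProduct.tmul_add]
    set Lj : Fin n → (S ⊗[R] N →ₗ[R] N) := fun j =>
      TensorProduct.lift (LinearMap.lsmul R N ∘ₗ (lam ∘ₗ LinearMap.mulLeft R (f j))) with hLj
    have hA2 : ∀ (ψ : M →ₗ[R] N), (∀ m : M, g m = ∑ i, (e i) ⊗ₜ[R] (ψ (f i • m))) →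
        ∀ (j : Fin n) (m : M), ψ (f j • m) = Lj j (g m) := by
      intro ψ hψ j m
      rw [hψ m, map_sum]
      symm
      calc ∑ i, Lj j (e i ⊗ₜ[R] ψ (f i • m))
          = ∑ i, (if i = j then (1:R) else 0) • ψ (f i • m) := by
            refine Finset.sum_congr rfl fun i _ => ?_
            have : Lj j (e i ⊗ₜ[R] ψ (f i • m)) = lam (f j * e i) • ψ (f i • m) := rfl
            rw [this, mul_comm, hdual]
        _ = ψ (f j • m) := by simp
    have hone : (∑ i, lam (e i) • f i) = (1 : S) := by
      have := L2 1
      simpa using this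
    have hdet : ∀ (ψ : M →ₗ[R] N), (∀ m : M, g m = ∑ i, (e i) ⊗ₜ[R] (ψ (f i • m))) →
        ∀ m : M, ψ m = ∑ i, lam (e i) • Lj i (g m) := by
      intro ψ hψ m
      conv_lhs => rw [show m = (1 : S) • m from (one_smul S m).symm, ← hone]
      rw [Finset.sum_smul]
      rw [show ((∑ i, (lam (e i) • f i) • m) : M) = ∑ i, lam (e i) • (f i • m) from
        Finset.sum_congr rfl fun i _ => smul_assoc _ _ _]
      rw [map_sum]
      refine Finset.sum_congr rfl fun i _ => ?_
      rw [map_smul, hA2 ψ hψ]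
    have hP : ∀ m : M, g m = ∑ i, e i ⊗ₜ[R] (L ∘ₗ g.restrictScalars R) (f i • m) := by
      intro m
      calc g m = ∑ i, e i ⊗ₜ[R] L (f i • g m) := (key (g m)).symm
        _ = _ := by
            refine Finset.sum_congr rfl fun i _ => ?_
            congr 1
            simp only [LinearMap.comp_apply, LinearMap.restrictScalars_apply, map_smul]
    refine ⟨L ∘ₗ g.restrictScalars R, hP, ?_⟩
    intro ψ' hψ'
    ext m
    rw [hdet ψ' hψ' m, hdet _ hP m]
  · exact Finset.sum_congr rfl fun i _ => by rw [mul_one]
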